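/- Let f : ℝ → ℂ be integrable with compact support, let R be a natural number, and suppose ∫_ℝ t^r f(t) dt = 0 for every natural number r < R. Let c : ℤ → ℂ be a finitely supported sequence, let Q be a natural number, and suppose Σ_{n ∈ ℤ} c(n) · n^m = 0 for every natural number m < Q. Fix a real number a and define F : ℝ → ℂ by F(t) = Σ_{n ∈ ℤ} c(n) · f(t − a·n). Then F is integrable with compact support and ∫_ℝ t^r F(t) dt = 0 for every natural number r < R + Q. -/

import Mathlib

open MeasureTheory

private lemma aux_int (f : ℝ → ℂ) (hf : Integrable f) (hfc : HasCompactSupport f) (k : ℕ) :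
    Integrable (fun t : ℝ => (t : ℂ) ^ k * f t) := by
  set K := tsupport f with hK
  have hKc : IsCompact K := hfc
  set g : ℝ → ℂ := K.indicator (fun t => (t : ℂ) ^ k) with hg
  have hgf : (fun t : ℝ => (t : ℂ) ^ k * f t) = g * f := by
    funext t
    by_cases ht : t ∈ K
    · simp [hg, Set.indicator_of_mem ht]
    · simp [hg, Set.indicator_of_notMem ht, image_eq_zero_of_notMem_tsupport ht]
  rw [hgf]
  obtain ⟨C, hC⟩ : ∃ C, ∀ t ∈ K, ‖(t : ℂ) ^ k‖ ≤ C :=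
    hKc.exists_bound_of_continuousOn (Continuous.continuousOn (by continuity))
  refine hf.bdd_mul (c := max C 0) ?_ (Filter.Eventually.of_forall fun t => ?_)
  · exact (Measurable.indicator (by measurability)
      (isClosed_tsupport f).measurableSet).aestronglyMeasurable
  · by_cases ht : t ∈ K
    · simp only [hg, Set.indicator_of_mem ht]
      exact le_trans (hC t ht) (le_max_left _ _)
    · simp [hg, Set.indicator_of_notMem ht]

private lemma aux_shift (f : ℝ → ℂ) (hf : Integrable f) (hfc : HasCompactSupport f)
    (k : ℕ) (b : ℝ) :
    ∫ t : ℝ, (t : ℂ) ^ k * f (t - b) =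
      ∑ j ∈ Finset.range (k + 1),
        ((k.choose j : ℂ) * (b : ℂ) ^ (k - j)) * ∫ t : ℝ, (t : ℂ) ^ j * f t := by
  have h0 : (fun t : ℝ => (t : ℂ) ^ k * f (t - b)) =
      fun t => (fun x : ℝ => ((x + b : ℝ) : ℂ) ^ k * f x) (t - b) := by
    funext t; simp [sub_add_cancel]
  rw [h0, integral_sub_right_eq_self (μ := volume) (fun x : ℝ => ((x + b : ℝ) : ℂ) ^ k * f x) b]
  have h1 : ∀ x : ℝ, ((x + b : ℝ) : ℂ) ^ k * f x =
      ∑ j ∈ Finset.range (k + 1),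
        ((k.choose j : ℂ) * (b : ℂ) ^ (k - j)) * ((x : ℂ) ^ j * f x) := by
    intro x
    push_cast
    rw [add_pow, Finset.sum_mul]
    exact Finset.sum_congr rfl (fun j _ => by ring)
  simp_rw [h1]
  rw [integral_finset_sum _ (fun j _ => (aux_int f hf hfc j).const_mul _)]
  exact Finset.sum_congr rfl (fun j _ => integral_const_mul _ _)

theorem stmt_1 (f : ℝ → ℂ) (hf : Integrable f) (hfc : HasCompactSupport f)
    (R : ℕ) (hmomf : ∀ r : ℕ, r < R → ∫ t : ℝ, (t : ℂ) ^ r * f t = 0)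
    (c : ℤ → ℂ) (hc : (Function.support c).Finite)
    (Q : ℕ) (hmomc : ∀ m : ℕ, m < Q → ∑ᶠ n : ℤ, c n * (n : ℂ) ^ m = 0)
    (a : ℝ) (F : ℝ → ℂ)
    (hF : ∀ t : ℝ, F t = ∑ᶠ n : ℤ, c n * f (t - a * n)) :
    Integrable F ∧ HasCompactSupport F ∧
      ∀ r : ℕ, r < R + Q → ∫ t : ℝ, (t : ℂ) ^ r * F t = 0 := by
  classical
  set s : Finset ℤ := hc.toFinset with hs
  have hFs : F = fun t => ∑ n ∈ s, c n * f (t - a * n) := by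
    funext t
    rw [hF t]
    apply finsum_eq_sum_of_support_subset
    intro n hn
    have hcn : c n ≠ 0 := fun h => hn (by simp [h])
    simpa [hs] using hcn
  -- compact support of translates
  have htrans : ∀ b : ℝ, HasCompactSupport (fun t : ℝ => f (t - b)) := fun b =>
    hfc.comp_homeomorph (Homeomorph.subRight b)
  -- integrability
  have hint : Integrable F := by
    rw [hFs]
    exact integrable_finset_sum s (fun n _ => (hf.comp_sub_right (a * n)).const_mul _)
  -- compact support
  have hcs : HasCompactSupport F := by
    rw [hFs]
    have : ∀ u : Finset ℤ, HasCompactSupport (fun t : ℝ => ∑ n ∈ u, c n * f (t - a * n)) := by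
      intro u
      induction u using Finset.induction with
      | empty => simp only [Finset.sum_empty]; exact HasCompactSupport.zero
      | @insert m u hm ih =>
          simp only [Finset.sum_insert hm]
          exact ((htrans (a * m)).mul_left).add ih
    exact this s
  refine ⟨hint, hcs, fun r hr => ?_⟩
  -- the moment computation
  have hterm : ∀ (n : ℤ), Integrable (fun t : ℝ => (t : ℂ) ^ r * (c n * f (t - a * n))) := by
    intro n
    have h1 : Integrable (fun t : ℝ => (t : ℂ) ^ r * f (t - a * n)) :=
      aux_int _ (hf.comp_sub_right (a * n)) (htrans (a * n)) r
    have : (fun t : ℝ => (t : ℂ) ^ r * (c n * f (t - a * n))) =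
        fun t : ℝ => c n * ((t : ℂ) ^ r * f (t - a * n)) := by funext t; ring
    rw [this]; exact h1.const_mul _
  have step1 : (∫ t : ℝ, (t : ℂ) ^ r * F t) =
      ∑ n ∈ s, c n * ∫ t : ℝ, (t : ℂ) ^ r * f (t - a * n) := by
    rw [hFs]
    simp only [Finset.mul_sum]
    rw [integral_finset_sum _ (fun n _ => hterm n)]
    refine Finset.sum_congr rfl (fun n _ => ?_)
    rw [← integral_const_mul]
    congr 1; funext t; ring
  rw [step1]
  simp_rw [aux_shift f hf hfc r, Finset.mul_sum]
  rw [Finset.sum_comm]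
  refine Finset.sum_eq_zero (fun j hj => ?_)
  by_cases hjR : j < R
  · simp [hmomf j hjR]
  · -- j ≥ R, so r - j < Q and the discrete moment vanishes
    push_neg at hjR
    have hjr : j ≤ r := by have := Finset.mem_range.mp hj; omega
    have hjQ : r - j < Q := by omega
    have hsum : ∑ n ∈ s, c n * (n : ℂ) ^ (r - j) = 0 := by
      rw [← hmomc (r - j) hjQ]
      symm
      apply finsum_eq_sum_of_support_subset
      intro n hn
      have hcn : c n ≠ 0 := by
        intro h; apply hn; simp [h]
      simpa [hs] using hcn
    calc ∑ n ∈ s, c n * ((r.choose j : ℂ) * ((a * (n : ℝ) : ℝ) : ℂ) ^ (r - j) *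
            ∫ t : ℝ, (t : ℂ) ^ j * f t)
        = ((r.choose j : ℂ) * (a : ℂ) ^ (r - j) * ∫ t : ℝ, (t : ℂ) ^ j * f t) *
            ∑ n ∈ s, c n * (n : ℂ) ^ (r - j) := by
          rw [Finset.mul_sum]
          exact Finset.sum_congr rfl (fun n _ => by push_cast; ring)
      _ = 0 := by rw [hsum, mul_zero]
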